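/- arXiv:1908.00291 — 2 statements merged into one kernel-verified Lean document; each statement's English description precedes it below -/
import Mathlib

section
/- Let v be an admissible weight function, and let 𝒯 = {T_t : t ≥ 0} be the semigroup of left translation operators on X = C_{0,v}(ℝ₊). If there exist f, g ∈ X forming a Li-Yorke scrambled pair for 𝒯, then 𝒯 has infinite topological entropy. -/
open MeasureTheory Filter Set
open scoped ENNReal

/-- The `L^p_v` norm of a function on `[0,∞)`:
`‖f‖ = (∫₀^∞ |f(x)|^p v(x) dx)^(1/p)`. -/
noncomputable def lpNorm (p : ℝ) (v : ℝ → ℝ) (f : ℝ → ℝ) : ℝ :=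
  (∫ x in Set.Ici (0:ℝ), |f x| ^ p * v x) ^ (1 / p)

/-- Membership in the weighted Lebesgue space `L^p_v(ℝ₊)`. -/
def MemLpW (p : ℝ) (v : ℝ → ℝ) (f : ℝ → ℝ) : Prop :=
  AEStronglyMeasurable f (volume.restrict (Set.Ici (0:ℝ))) ∧
    IntegrableOn (fun x => |f x| ^ p * v x) (Set.Ici (0:ℝ))

/-- The left translation operator `(T_t f)(x) = f (x + t)`. -/
def translateW (t : ℝ) (f : ℝ → ℝ) : ℝ → ℝ := fun x => f (x + t)

/-- `v` is an admissible weight function: strictly positive, locally integrable on `[0,∞)`,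
and there are `M ≥ 1`, `w ≥ 0` with `v x ≤ M * exp (w*t) * v (x+t)` for all `x, t ≥ 0`. -/
def AdmissibleWeight (v : ℝ → ℝ) : Prop :=
  (∀ x, 0 ≤ x → 0 < v x) ∧
  (∀ a, 0 ≤ a → IntegrableOn v (Set.Icc (0:ℝ) a)) ∧
  ∃ M, 1 ≤ M ∧ ∃ w, 0 ≤ w ∧ ∀ x, 0 ≤ x → ∀ t, 0 ≤ t →
    v x ≤ M * Real.exp (w * t) * v (x + t)

/-- The set `{ v x / v y : 0 ≤ x ≤ y }`. -/
def ratioSet (v : ℝ → ℝ) : Set ℝ := {r | ∃ x y, 0 ≤ x ∧ x ≤ y ∧ r = v x / v y}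

/-- Membership in `C_{0,v}(ℝ₊)`: continuous on `[0,∞)` with `|f x| * v x → 0` as `x → ∞`. -/
def MemC0 (v : ℝ → ℝ) (f : ℝ → ℝ) : Prop :=
  ContinuousOn f (Set.Ici (0:ℝ)) ∧
    Filter.Tendsto (fun x => |f x| * v x) Filter.atTop (nhds 0)

/-- The norm on `C_{0,v}(ℝ₊)`: `‖f‖ = sup { |f x| * v x : x ≥ 0 }`. -/
noncomputable def c0Norm (v : ℝ → ℝ) (f : ℝ → ℝ) : ℝ :=
  sSup ((fun x => |f x| * v x) '' Set.Ici (0:ℝ))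

/-- `S` is a `(t,ε)`-separated set for the family `{T_u : u ≥ 0}` with respect to the
distance `d`: distinct points of `S` are `ε`-apart at some time `u ∈ [0,t]`. -/
def IsSepSet {X : Type*} (d : X → X → ℝ) (T : ℝ → X → X) (t ε : ℝ) (S : Set X) : Prop :=
  ∀ f ∈ S, ∀ g ∈ S, f ≠ g → ∃ u ∈ Set.Icc (0:ℝ) t, ε ≤ d (T u f) (T u g)

/-- The largest cardinality `s_{t,ε}(𝒯,K)` of a `(t,ε)`-separated subset of `K`
(as an extended natural number, viewed in `ℝ≥0∞`). -/
noncomputable def maxSep {X : Type*} (d : X → X → ℝ) (T : ℝ → X → X) (K : Set X)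
    (t ε : ℝ) : ℝ≥0∞ :=
  ⨆ (S : Finset X) (_ : ↑S ⊆ K ∧ IsSepSet d T t ε ↑S), (S.card : ℝ≥0∞)

open Classical in
/-- Extended-real logarithm of an extended nonnegative real. -/
noncomputable def elog (x : ℝ≥0∞) : EReal :=
  if x = ⊤ then ⊤ else ((Real.log x.toReal : ℝ) : EReal)

/-- The topological entropy `h(𝒯,K)` of the family `{T_u : u ≥ 0}` on the set `K`,
with respect to the distance `d`; since `ε ↦ limsup_t (1/t) log s_{t,ε}` is antitone,
the limit as `ε → 0⁺` is the supremum over `ε > 0`. -/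
noncomputable def entropyOn {X : Type*} (d : X → X → ℝ) (T : ℝ → X → X) (K : Set X) : EReal :=
  ⨆ (ε : ℝ) (_ : 0 < ε),
    Filter.limsup (fun t : ℝ => ((t⁻¹ : ℝ) : EReal) * elog (maxSep d T K t ε)) Filter.atTop

/-- Sequential compactness of a set with respect to a (pseudo)distance `d`; for metric
spaces this is equivalent to compactness. -/
def DSeqCompact {X : Type*} (d : X → X → ℝ) (K : Set X) : Prop :=
  ∀ u : ℕ → X, (∀ n, u n ∈ K) → ∃ g ∈ K, ∃ φ : ℕ → ℕ, StrictMono φ ∧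
    Filter.Tendsto (fun n => d (u (φ n)) g) Filter.atTop (nhds 0)

/-- The topological entropy `h(𝒯) = sup { h(𝒯,K) : K ⊆ A compact }` of the family
`{T_u : u ≥ 0}` on the space `A`, with respect to the distance `d`. -/
noncomputable def entropyFam {X : Type*} (d : X → X → ℝ) (T : ℝ → X → X) (A : Set X) : EReal :=
  ⨆ (K : Set X) (_ : K ⊆ A ∧ DSeqCompact d K), entropyOn d T K

/-! ### Auxiliary material for the proof -/

section LiYorkeEntropyAux

open Filter Set

private lemma c0Norm_le_of_forall {v F : ℝ → ℝ} {b : ℝ} (hb : 0 ≤ b)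
    (h : ∀ x, 0 ≤ x → |F x| * v x ≤ b) : c0Norm v F ≤ b := by
  apply csSup_le
  · exact ⟨|F 0| * v 0, ⟨0, Set.self_mem_Ici, rfl⟩⟩
  · rintro r ⟨x, hx, rfl⟩
    exact h x hx

private lemma c0Norm_sub_self (v g : ℝ → ℝ) : c0Norm v (g - g) = 0 := by
  unfold c0Norm
  have h1 : (fun x => |(g - g) x| * v x) = fun _ : ℝ => (0:ℝ) := by
    funext x; simp
  rw [h1, Set.Nonempty.image_const Set.nonempty_Ici (0:ℝ)]
  exact csSup_singleton _

private lemma one_le_abs_natCast_sub {a b : ℕ} (h : a ≠ b) : (1:ℝ) ≤ |(a:ℝ) - (b:ℝ)| := by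
  have key : ∀ x y : ℕ, x < y → (1:ℝ) ≤ |(x:ℝ) - (y:ℝ)| := by
    intro x y hxy
    have h1 : (x:ℝ) + 1 ≤ (y:ℝ) := by exact_mod_cast hxy
    rw [abs_sub_comm, abs_of_nonneg (by linarith)]
    linarith
  rcases h.lt_or_gt with hlt | hlt
  · exact key a b hlt
  · rw [abs_sub_comm]; exact key b a hlt

private lemma ereal_eq_top_of_forall_le {x : EReal} (h : ∀ C : ℝ, (C:EReal) ≤ x) : x = ⊤ := by
  induction x using EReal.rec with
  | bot => simpa using h 0
  | coe r =>
      have := h (r+1)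
      rw [EReal.coe_le_coe_iff] at this
      linarith
  | top => rfl

/-- A window weight bound from admissibility. -/
private lemma window_weight_le {v : ℝ → ℝ} {M w : ℝ} (hM0 : 0 < M) (hw : 0 ≤ w)
    (hvpos : ∀ x, 0 ≤ x → 0 < v x)
    (hadm : ∀ x, 0 ≤ x → ∀ t, 0 ≤ t → v x ≤ M * Real.exp (w * t) * v (x + t))
    {Y z : ℝ} (hY : 1 ≤ Y) (hz1 : Y - 1 ≤ z) (hz2 : z ≤ Y) :
    v z ≤ M * Real.exp w * v Y := by
  have hz0 : (0:ℝ) ≤ z := by linarith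
  have hY0 : (0:ℝ) ≤ Y := by linarith
  have h1 := hadm z hz0 (Y - z) (by linarith)
  have h2 : z + (Y - z) = Y := by ring
  rw [h2] at h1
  have h3 : Real.exp (w * (Y - z)) ≤ Real.exp w := by
    apply Real.exp_le_exp.2
    nlinarith
  calc v z ≤ M * Real.exp (w * (Y - z)) * v Y := h1
    _ ≤ M * Real.exp w * v Y := by
        apply mul_le_mul_of_nonneg_right _ (hvpos Y hY0).le
        exact mul_le_mul_of_nonneg_left h3 hM0.le

/-- Number of spikes used for event `m`. -/
private noncomputable def spikeJ (T : ℕ → ℝ) (m : ℕ) : ℕ := ⌈Real.exp ((m:ℝ) * T m)⌉₊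

/-- Center of spike `j` of event `m`, inside the window `[X m + T m - 1, X m + T m]`. -/
private noncomputable def spikeC (T X : ℕ → ℝ) (m j : ℕ) : ℝ :=
  X m + T m - 1 + ((j:ℝ)+1) * ((spikeJ T m : ℝ)+1)⁻¹

/-- Height used for spikes of event `m`. -/
private noncomputable def spikeB (v : ℝ → ℝ) (M w : ℝ) (T X : ℕ → ℝ) (m : ℕ) : ℝ :=
  (((m:ℝ)+1) * (M * Real.exp w * v (X m + T m)))⁻¹

/-- The spike (tent) function `j` of event `m`. -/
private noncomputable def spikeQ (v : ℝ → ℝ) (M w : ℝ) (T X : ℕ → ℝ) (m j : ℕ) : ℝ → ℝ :=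
  fun z => spikeB v M w T X m *
    max 0 (1 - 2*((spikeJ T m : ℝ)+1) * |z - spikeC T X m j|)

private lemma spikeJ_pos (T : ℕ → ℝ) (m : ℕ) : 0 < spikeJ T m :=
  Nat.ceil_pos.mpr (Real.exp_pos _)

private lemma spikeJ_log (T : ℕ → ℝ) (m : ℕ) : (m:ℝ) * T m ≤ Real.log (spikeJ T m) := by
  have h1 : Real.exp ((m:ℝ) * T m) ≤ (spikeJ T m : ℝ) := Nat.le_ceil _
  have := Real.log_le_log (Real.exp_pos _) h1
  rwa [Real.log_exp] at this

private lemma spikeB_pos {v : ℝ → ℝ} {M w : ℝ} {T X : ℕ → ℝ} {m : ℕ}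
    (hM0 : 0 < M) (hvY : 0 < v (X m + T m)) : 0 < spikeB v M w T X m := by
  unfold spikeB
  have h1 : (0:ℝ) < ((m:ℝ)+1) * (M * Real.exp w * v (X m + T m)) := by
    apply mul_pos (by positivity) (mul_pos (mul_pos hM0 (Real.exp_pos _)) hvY)
  exact inv_pos.2 h1

private lemma spikeQ_supp {v : ℝ → ℝ} {M w : ℝ} {T X : ℕ → ℝ} {m j : ℕ}
    (hj : j < spikeJ T m) {z : ℝ} (hz : spikeQ v M w T X m j z ≠ 0) :
    X m + T m - 1 ≤ z ∧ z ≤ X m + T m := by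
  unfold spikeQ spikeC at hz
  have hJ0 : (0:ℝ) < (spikeJ T m : ℝ) + 1 := by positivity
  have hjJ : (j:ℝ) + 1 ≤ (spikeJ T m : ℝ) := by exact_mod_cast hj
  have hs1 : ((spikeJ T m : ℝ) + 1) * ((spikeJ T m : ℝ) + 1)⁻¹ = 1 :=
    mul_inv_cancel₀ (ne_of_gt hJ0)
  have hs0 : (0:ℝ) < ((spikeJ T m : ℝ) + 1)⁻¹ := inv_pos.2 hJ0
  set δ : ℝ := z - (X m + T m - 1 + ((j:ℝ)+1) * ((spikeJ T m : ℝ)+1)⁻¹) with hδ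
  have hmaxpos : 0 < 1 - 2*((spikeJ T m : ℝ)+1) * |δ| := by
    by_contra hn
    push_neg at hn
    rw [max_eq_left hn, mul_zero] at hz
    exact hz rfl
  have hd : ((spikeJ T m:ℝ)+1) * (2 * |δ|) < ((spikeJ T m:ℝ)+1) * (((spikeJ T m:ℝ)+1)⁻¹) := by
    have e : ((spikeJ T m:ℝ)+1) * (2*|δ|) = 2*((spikeJ T m:ℝ)+1)*|δ| := by ring
    rw [e, hs1]
    linarith
  have habs : 2 * |δ| < ((spikeJ T m:ℝ)+1)⁻¹ := lt_of_mul_lt_mul_left hd hJ0.le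
  obtain ⟨hA, hB⟩ := abs_lt.1 (show |δ| < ((spikeJ T m:ℝ)+1)⁻¹/2 from by linarith)
  have hmul0 : (0:ℝ) ≤ (j:ℝ) * ((spikeJ T m:ℝ)+1)⁻¹ :=
    mul_nonneg (by positivity) hs0.le
  have hmul1 : (0:ℝ) ≤ ((spikeJ T m:ℝ) - ((j:ℝ)+1)) * ((spikeJ T m:ℝ)+1)⁻¹ :=
    mul_nonneg (by linarith) hs0.le
  constructor
  · nlinarith
  · nlinarith

private lemma spikeQ_nonneg {v : ℝ → ℝ} {M w : ℝ} {T X : ℕ → ℝ} {m j : ℕ}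
    (hM0 : 0 < M) (hvY : 0 < v (X m + T m)) (z : ℝ) : 0 ≤ spikeQ v M w T X m j z := by
  unfold spikeQ
  exact mul_nonneg (spikeB_pos hM0 hvY).le (le_max_left _ _)

private lemma spikeQ_le {v : ℝ → ℝ} {M w : ℝ} {T X : ℕ → ℝ} {m j : ℕ}
    (hM0 : 0 < M) (hvY : 0 < v (X m + T m)) (z : ℝ) :
    spikeQ v M w T X m j z ≤ spikeB v M w T X m := by
  unfold spikeQ
  have hβ := (spikeB_pos (v := v) (w := w) (T := T) (X := X) (m := m) hM0 hvY).le
  have h1 : max 0 (1 - 2*((spikeJ T m : ℝ)+1) * |z - spikeC T X m j|) ≤ 1 := by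
    apply max_le zero_le_one
    have : (0:ℝ) ≤ 2*((spikeJ T m : ℝ)+1) * |z - spikeC T X m j| := by positivity
    linarith
  nlinarith

private lemma spikeQ_self (v : ℝ → ℝ) (M w : ℝ) (T X : ℕ → ℝ) (m j : ℕ) :
    spikeQ v M w T X m j (spikeC T X m j) = spikeB v M w T X m := by
  unfold spikeQ
  rw [sub_self, abs_zero, mul_zero, sub_zero, max_eq_right zero_le_one, mul_one]

private lemma spikeQ_other {v : ℝ → ℝ} {M w : ℝ} {T X : ℕ → ℝ} {m j j' : ℕ}
    (hne : j ≠ j') : spikeQ v M w T X m j (spikeC T X m j') = 0 := by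
  unfold spikeQ
  have hJ0 : (0:ℝ) < (spikeJ T m : ℝ) + 1 := by positivity
  have hs0 : (0:ℝ) < ((spikeJ T m : ℝ) + 1)⁻¹ := inv_pos.2 hJ0
  have hs1 : ((spikeJ T m : ℝ) + 1) * ((spikeJ T m : ℝ) + 1)⁻¹ = 1 :=
    mul_inv_cancel₀ (ne_of_gt hJ0)
  have hdist : spikeC T X m j' - spikeC T X m j
      = ((j':ℝ) - (j:ℝ)) * ((spikeJ T m : ℝ) + 1)⁻¹ := by
    unfold spikeC; ring
  have habs : ((spikeJ T m : ℝ) + 1)⁻¹ ≤ |spikeC T X m j' - spikeC T X m j| := by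
    rw [hdist, abs_mul, abs_of_pos hs0]
    have h1 : (1:ℝ) ≤ |(j':ℝ) - (j:ℝ)| := one_le_abs_natCast_sub (Ne.symm hne)
    nlinarith
  have hmul : (1:ℝ) ≤ ((spikeJ T m : ℝ)+1) * |spikeC T X m j' - spikeC T X m j| := by
    calc (1:ℝ) = ((spikeJ T m : ℝ)+1) * ((spikeJ T m : ℝ) + 1)⁻¹ := hs1.symm
      _ ≤ ((spikeJ T m : ℝ)+1) * |spikeC T X m j' - spikeC T X m j| :=
          mul_le_mul_of_nonneg_left habs hJ0.le
  have hneg : 1 - 2*((spikeJ T m : ℝ)+1) * |spikeC T X m j' - spikeC T X m j| ≤ 0 := by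
    nlinarith
  rw [max_eq_left hneg, mul_zero]

private lemma spikeB_mul_window {v : ℝ → ℝ} {M w : ℝ} {T X : ℕ → ℝ} {m : ℕ}
    (hM0 : 0 < M) (hvY : 0 < v (X m + T m)) :
    spikeB v M w T X m * (M * Real.exp w * v (X m + T m)) = ((m:ℝ)+1)⁻¹ := by
  unfold spikeB
  have hpos : (0:ℝ) < M * Real.exp w * v (X m + T m) :=
    mul_pos (mul_pos hM0 (Real.exp_pos _)) hvY
  rw [mul_inv, mul_assoc, inv_mul_cancel₀ (ne_of_gt hpos), mul_one]

/-- The weighted norm of each spike is at most `1/(m+1)`. -/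
private lemma spikeQ_norm_le {v : ℝ → ℝ} {M w : ℝ} {T X : ℕ → ℝ} {m j : ℕ}
    (hM0 : 0 < M) (hw : 0 ≤ w) (hvpos : ∀ x, 0 ≤ x → 0 < v x)
    (hadm : ∀ x, 0 ≤ x → ∀ t, 0 ≤ t → v x ≤ M * Real.exp (w * t) * v (x + t))
    (hY : 1 ≤ X m + T m) (hj : j < spikeJ T m) (x : ℝ) (hx : 0 ≤ x) :
    |spikeQ v M w T X m j x| * v x ≤ ((m:ℝ)+1)⁻¹ := by
  have hvY : 0 < v (X m + T m) := hvpos _ (by linarith)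
  by_cases hz : spikeQ v M w T X m j x = 0
  · rw [hz, abs_zero, zero_mul]
    positivity
  · obtain ⟨hw1, hw2⟩ := spikeQ_supp hj hz
    have habs : |spikeQ v M w T X m j x| ≤ spikeB v M w T X m := by
      rw [abs_of_nonneg (spikeQ_nonneg hM0 hvY x)]
      exact spikeQ_le hM0 hvY x
    have hvz : v x ≤ M * Real.exp w * v (X m + T m) :=
      window_weight_le hM0 hw hvpos hadm hY hw1 hw2
    calc |spikeQ v M w T X m j x| * v x
        ≤ spikeB v M w T X m * (M * Real.exp w * v (X m + T m)) :=
          mul_le_mul habs hvz (hvpos x hx).le (spikeB_pos hM0 hvY).le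
      _ = ((m:ℝ)+1)⁻¹ := spikeB_mul_window hM0 hvY

private lemma spikeQ_continuous (v : ℝ → ℝ) (M w : ℝ) (T X : ℕ → ℝ) (m j : ℕ) :
    Continuous (spikeQ v M w T X m j) := by
  unfold spikeQ
  apply Continuous.mul continuous_const
  apply Continuous.max continuous_const
  apply Continuous.sub continuous_const
  apply Continuous.mul continuous_const
  exact (continuous_id.sub continuous_const).abs

end LiYorkeEntropyAux

set_option maxHeartbeats 1000000 in
theorem c0_infinite_entropy_of_liYorke_pair
    (v : ℝ → ℝ) (hv : AdmissibleWeight v)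
    (hLY : ∃ f g, MemC0 v f ∧ MemC0 v g ∧
      -- liminf_{t→∞} ‖T_t f − T_t g‖ = 0
      (∀ ε > (0:ℝ), ∃ᶠ t in Filter.atTop,
        c0Norm v (translateW t f - translateW t g) < ε) ∧
      -- limsup_{t→∞} ‖T_t f − T_t g‖ > 0
      (∃ c > (0:ℝ), ∃ᶠ t in Filter.atTop,
        c ≤ c0Norm v (translateW t f - translateW t g))) :
    entropyFam (fun f g => c0Norm v (f - g)) translateW {f | MemC0 v f} = ⊤ := by
  classical
  obtain ⟨hpos, _hloc, M, hM, w, hw, hadm⟩ := hv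
  obtain ⟨f, g, hf, hg, _hli, c, hc, hls⟩ := hLY
  have hM0 : (0:ℝ) < M := lt_of_lt_of_le one_pos hM
  -- weighted decay of the difference
  have Hb : Tendsto (fun y => |(f - g) y| * v y) atTop (nhds 0) := by
    have hbound : ∀ᶠ y in atTop, |(f - g) y| * v y ≤ |f y| * v y + |g y| * v y := by
      filter_upwards [eventually_ge_atTop (0:ℝ)] with y hy
      have h1 : |(f - g) y| ≤ |f y| + |g y| := by
        have := abs_sub (f y) (g y)
        simpa using this
      have h2 : (0:ℝ) ≤ v y := (hpos y hy).le
      nlinarith [abs_nonneg (f y), abs_nonneg (g y)]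
    have hnn : ∀ᶠ y in atTop, (0:ℝ) ≤ |(f - g) y| * v y := by
      filter_upwards [eventually_ge_atTop (0:ℝ)] with y hy
      exact mul_nonneg (abs_nonneg _) (hpos y hy).le
    have hsum : Tendsto (fun y => |f y| * v y + |g y| * v y) atTop (nhds 0) := by
      simpa using hf.2.add hg.2
    exact squeeze_zero' hnn hbound hsum
  -- event extraction from the Li-Yorke limsup property
  have EV : ∀ m : ℕ, ∃ Tm Xm : ℝ, 1 ≤ Tm ∧ (m:ℝ) ≤ Tm ∧ 0 ≤ Xm ∧
      c/2 < |(f - g) (Xm + Tm)| * v Xm ∧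
      |(f - g) (Xm + Tm)| * v (Xm + Tm) ≤ c / (2 * (((m:ℝ)+1) * (M * Real.exp w))) := by
    intro m
    have hPm : (0:ℝ) < ((m:ℝ)+1) * (M * Real.exp w) :=
      mul_pos (by positivity) (mul_pos hM0 (Real.exp_pos _))
    have hBpos : (0:ℝ) < c / (2 * (((m:ℝ)+1) * (M * Real.exp w))) :=
      div_pos hc (by linarith)
    have hev : ∀ᶠ y in atTop, |(f - g) y| * v y < c / (2 * (((m:ℝ)+1) * (M * Real.exp w))) :=
      (tendsto_order.1 Hb).2 _ hBpos
    obtain ⟨R, hR⟩ := eventually_atTop.1 hev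
    obtain ⟨Tm, hTge, hTc⟩ := frequently_atTop.1 hls (max (max ((m:ℝ)) 1) R)
    have h1T : 1 ≤ Tm := le_trans (le_max_of_le_left (le_max_right _ _)) hTge
    have hmT : (m:ℝ) ≤ Tm := le_trans (le_max_of_le_left (le_max_left _ _)) hTge
    have hRT : R ≤ Tm := le_trans (le_max_right _ _) hTge
    have hwit : ∃ Xm, 0 ≤ Xm ∧ c/2 < |(f - g) (Xm + Tm)| * v Xm := by
      by_contra hno
      push_neg at hno
      have hle : c0Norm v (translateW Tm f - translateW Tm g) ≤ c/2 := by
        apply c0Norm_le_of_forall (by linarith)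
        intro x hx
        exact hno x hx
      linarith
    obtain ⟨Xm, hX0, hXc⟩ := hwit
    exact ⟨Tm, Xm, h1T, hmT, hX0, hXc, (hR (Xm + Tm) (by linarith)).le⟩
  choose T X hT1 hTm hX0 hA1 hA2 using EV
  have hY1 : ∀ m, 1 ≤ X m + T m := fun m => by
    have := hT1 m; have := hX0 m; linarith
  have hvY : ∀ m, 0 < v (X m + T m) := fun m => hpos _ (by have := hY1 m; linarith)
  have hvX : ∀ m, 0 < v (X m) := fun m => hpos _ (hX0 m)
  -- the key weight-ratio inequality
  have hkey : ∀ m : ℕ, (((m:ℝ)+1) * (M * Real.exp w * v (X m + T m))) ≤ v (X m) := by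
    intro m
    have hb_pos : 0 < |(f - g) (X m + T m)| := by
      by_contra hb0
      push_neg at hb0
      have h0 : |(f - g) (X m + T m)| = 0 := le_antisymm hb0 (abs_nonneg _)
      have h1 := hA1 m
      rw [h0, zero_mul] at h1
      linarith
    have hPm : (0:ℝ) < ((m:ℝ)+1) * (M * Real.exp w) :=
      mul_pos (by positivity) (mul_pos hM0 (Real.exp_pos _))
    have hPne : (((m:ℝ)+1) * (M * Real.exp w)) ≠ 0 := ne_of_gt hPm
    have h2 : (((m:ℝ)+1) * (M * Real.exp w)) * (|(f - g) (X m + T m)| * v (X m + T m))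
        ≤ c/2 := by
      have h3 := mul_le_mul_of_nonneg_left (hA2 m) hPm.le
      have h4 : (((m:ℝ)+1) * (M * Real.exp w))
          * (c / (2 * (((m:ℝ)+1) * (M * Real.exp w)))) = c/2 := by
        field_simp
      linarith
    have h5 : (((m:ℝ)+1) * (M * Real.exp w)) * (|(f - g) (X m + T m)| * v (X m + T m))
        < |(f - g) (X m + T m)| * v (X m) := lt_of_le_of_lt h2 (hA1 m)
    have h6 : (((m:ℝ)+1) * (M * Real.exp w * v (X m + T m))) * |(f - g) (X m + T m)|
        < (v (X m)) * |(f - g) (X m + T m)| := by nlinarith [h5]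
    exact le_of_lt (lt_of_mul_lt_mul_right h6 (abs_nonneg _))
  have hβv : ∀ m, 1 ≤ spikeB v M w T X m * v (X m) := by
    intro m
    have hD : (0:ℝ) < ((m:ℝ)+1) * (M * Real.exp w * v (X m + T m)) :=
      mul_pos (by positivity) (mul_pos (mul_pos hM0 (Real.exp_pos _)) (hvY m))
    have h1 := mul_le_mul_of_nonneg_left (hkey m) (inv_nonneg.2 hD.le)
    rw [inv_mul_cancel₀ (ne_of_gt hD)] at h1
    unfold spikeB
    exact h1
  have hζmem : ∀ m j, j < spikeJ T m →
      X m + T m - 1 ≤ spikeC T X m j ∧ spikeC T X m j ≤ X m + T m := by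
    intro m j hj
    have h1 : spikeQ v M w T X m j (spikeC T X m j) ≠ 0 := by
      rw [spikeQ_self]
      exact ne_of_gt (spikeB_pos hM0 (hvY m))
    exact spikeQ_supp hj h1
  -- the compact set
  set K : Set (ℝ → ℝ) :=
    insert (0 : ℝ → ℝ) {F | ∃ m j, j < spikeJ T m ∧ F = spikeQ v M w T X m j} with hK_def
  -- K consists of C0 functions
  have hzeroC0 : MemC0 v (0 : ℝ → ℝ) := by
    constructor
    · exact continuousOn_const
    · have h1 : (fun x => |(0 : ℝ → ℝ) x| * v x) = fun _ : ℝ => (0:ℝ) := by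
        funext x; simp
      rw [h1]
      exact tendsto_const_nhds
  have hQC0 : ∀ m j, j < spikeJ T m → MemC0 v (spikeQ v M w T X m j) := by
    intro m j hj
    constructor
    · exact (spikeQ_continuous v M w T X m j).continuousOn
    · have hev : (fun x => |spikeQ v M w T X m j x| * v x) =ᶠ[atTop] (fun _ : ℝ => (0:ℝ)) := by
        filter_upwards [eventually_gt_atTop (X m + T m)] with x hx
        have hz : spikeQ v M w T X m j x = 0 := by
          by_contra hne
          exact absurd (spikeQ_supp hj hne).2 (not_le.2 hx)
        simp [hz]
      exact tendsto_const_nhds.congr' hev.symm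
  have hKA : K ⊆ {F | MemC0 v F} := by
    intro F hF
    rw [hK_def] at hF
    rcases Set.mem_insert_iff.1 hF with h0 | hmem
    · rw [h0]; exact hzeroC0
    · obtain ⟨m, j, hj, rfl⟩ := hmem
      exact hQC0 m j hj
  -- distance-to-zero bounds for spikes
  have hQd : ∀ m j, j < spikeJ T m →
      0 ≤ c0Norm v (spikeQ v M w T X m j - 0) ∧
      c0Norm v (spikeQ v M w T X m j - 0) ≤ ((m:ℝ)+1)⁻¹ := by
    intro m j hj
    have hsub : (spikeQ v M w T X m j - 0 : ℝ → ℝ) = spikeQ v M w T X m j := sub_zero _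
    rw [hsub]
    constructor
    · have hub : ∀ r ∈ ((fun x => |spikeQ v M w T X m j x| * v x) '' Set.Ici (0:ℝ)),
          r ≤ ((m:ℝ)+1)⁻¹ := by
        rintro r ⟨x, hx, rfl⟩
        exact spikeQ_norm_le hM0 hw hpos hadm (hY1 m) hj x hx
      have hmem : |spikeQ v M w T X m j 0| * v 0
          ∈ ((fun x => |spikeQ v M w T X m j x| * v x) '' Set.Ici (0:ℝ)) :=
        ⟨0, Set.self_mem_Ici, rfl⟩
      have h1 : |spikeQ v M w T X m j 0| * v 0 ≤ c0Norm v (spikeQ v M w T X m j) :=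
        le_csSup ⟨((m:ℝ)+1)⁻¹, hub⟩ hmem
      have h2 : 0 ≤ |spikeQ v M w T X m j 0| * v 0 :=
        mul_nonneg (abs_nonneg _) (hpos 0 le_rfl).le
      linarith
    · exact c0Norm_le_of_forall (by positivity)
        (fun x hx => spikeQ_norm_le hM0 hw hpos hadm (hY1 m) hj x hx)
  -- sequential compactness of K
  have hKcomp : DSeqCompact (fun f g => c0Norm v (f - g)) K := by
    intro u hu
    by_cases hcase : ∃ g0 ∈ K, {n | u n = g0}.Infinite
    · obtain ⟨g0, hg0K, hg0⟩ := hcase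
      refine ⟨g0, hg0K, Nat.nth (fun n => u n = g0), Nat.nth_strictMono hg0, ?_⟩
      refine tendsto_const_nhds.congr fun n => ?_
      show (0:ℝ) = c0Norm v (u (Nat.nth (fun n => u n = g0) n) - g0)
      rw [Nat.nth_mem_of_infinite hg0 n, c0Norm_sub_self]
    · push_neg at hcase
      refine ⟨(0 : ℝ → ℝ), Set.mem_insert _ _, id, strictMono_id, ?_⟩
      rw [Metric.tendsto_atTop]
      intro ε hε
      obtain ⟨m₀, hm₀⟩ := exists_nat_one_div_lt hε
      set Bad : Set (ℝ → ℝ) :=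
        insert (0 : ℝ → ℝ)
          (⋃ m ∈ Set.Iic m₀, ⋃ j ∈ Set.Iio (spikeJ T m), {spikeQ v M w T X m j}) with hBad_def
      have hBadK : Bad ⊆ K := by
        intro F hF
        rcases Set.mem_insert_iff.1 hF with h0 | hF2
        · rw [h0]; exact Set.mem_insert _ _
        · simp only [Set.mem_iUnion] at hF2
          obtain ⟨m, _, j, hj, hFmem⟩ := hF2
          rw [Set.mem_singleton_iff] at hFmem
          rw [hFmem, hK_def]
          exact Set.mem_insert_iff.2 (Or.inr ⟨m, j, hj, rfl⟩)
      have hBadFin : Bad.Finite := by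
        apply Set.Finite.insert
        apply Set.Finite.biUnion (Set.finite_Iic m₀)
        intro m _
        apply Set.Finite.biUnion (Set.finite_Iio (spikeJ T m))
        intro j _
        exact Set.finite_singleton _
      have hNfin : {n | u n ∈ Bad}.Finite := by
        have hsub : {n | u n ∈ Bad} ⊆ ⋃ g0 ∈ Bad, {n | u n = g0} := by
          intro n hn
          exact Set.mem_biUnion hn rfl
        apply Set.Finite.subset _ hsub
        apply Set.Finite.biUnion hBadFin
        intro g0 hg0
        exact hcase g0 (hBadK hg0)
      obtain ⟨N, hN⟩ := hNfin.bddAbove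
      refine ⟨N+1, fun n hn => ?_⟩
      have hnotbad : u n ∉ Bad := by
        intro hbad
        have h1 : n ≤ N := hN hbad
        omega
      have huK := hu n
      rw [hK_def] at huK
      rcases Set.mem_insert_iff.1 huK with h0 | hmem
      · exfalso
        apply hnotbad
        rw [h0]
        exact Set.mem_insert _ _
      · obtain ⟨m, j, hj, hQn⟩ := hmem
        have hm : m₀ < m := by
          by_contra hle
          push_neg at hle
          apply hnotbad
          rw [hQn, hBad_def]
          apply Set.mem_insert_iff.2
          right
          simp only [Set.mem_iUnion]
          exact ⟨m, Set.mem_Iic.2 hle, j, Set.mem_Iio.2 hj, Set.mem_singleton _⟩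
        show dist (c0Norm v (u n - 0)) 0 < ε
        rw [Real.dist_eq, sub_zero, hQn]
        rw [abs_of_nonneg (hQd m j hj).1]
        have h2 : ((m:ℝ)+1)⁻¹ < ε := by
          have h3 : ((m₀:ℝ)+1)⁻¹ < ε := by
            rw [← one_div]; exact hm₀
          have h4 : ((m₀:ℝ)+1) ≤ ((m:ℝ)+1) := by
            have : (m₀:ℝ) ≤ (m:ℝ) := by exact_mod_cast hm.le
            linarith
          have h5 : ((m:ℝ)+1)⁻¹ ≤ ((m₀:ℝ)+1)⁻¹ := inv_anti₀ (by positivity) h4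
          linarith
        exact lt_of_le_of_lt (hQd m j hj).2 h2
  -- large separated sets at horizon T m
  have hmax : ∀ m : ℕ, (spikeJ T m : ℝ≥0∞) ≤
      maxSep (fun f g => c0Norm v (f - g)) translateW K (T m) 1 := by
    intro m
    set S : Finset (ℝ → ℝ) := (Finset.range (spikeJ T m)).image (spikeQ v M w T X m)
      with hS_def
    have hinj : Set.InjOn (spikeQ v M w T X m) ↑(Finset.range (spikeJ T m)) := by
      intro j hj j' hj' heq
      by_contra hne
      have h1 := congrFun heq (spikeC T X m j)
      rw [spikeQ_self, spikeQ_other (Ne.symm hne)] at h1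
      exact (ne_of_gt (spikeB_pos (w := w) hM0 (hvY m))) h1
    have hcard : S.card = spikeJ T m := by
      rw [hS_def, Finset.card_image_of_injOn hinj, Finset.card_range]
    have hSK : ↑S ⊆ K := by
      intro F hF
      rw [hS_def] at hF
      simp only [Finset.coe_image, Set.mem_image, Finset.coe_range, Set.mem_Iio] at hF
      obtain ⟨j, hj, rfl⟩ := hF
      rw [hK_def]
      exact Set.mem_insert_iff.2 (Or.inr ⟨m, j, hj, rfl⟩)
    have hSsep : IsSepSet (fun f g => c0Norm v (f - g)) translateW (T m) 1 ↑S := by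
      intro F hF G hG hFG
      rw [hS_def] at hF hG
      simp only [Finset.coe_image, Set.mem_image, Finset.coe_range, Set.mem_Iio] at hF hG
      obtain ⟨j, hj, rfl⟩ := hF
      obtain ⟨j', hj', rfl⟩ := hG
      have hjj : j ≠ j' := fun h => hFG (by rw [h])
      refine ⟨spikeC T X m j - X m, ⟨?_, ?_⟩, ?_⟩
      · have h1 := (hζmem m j hj).1
        have h2 := hT1 m
        linarith
      · have h1 := (hζmem m j hj).2
        linarith
      · show (1:ℝ) ≤ c0Norm v (translateW (spikeC T X m j - X m) (spikeQ v M w T X m j)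
          - translateW (spikeC T X m j - X m) (spikeQ v M w T X m j'))
        have hu0 : (0:ℝ) ≤ spikeC T X m j - X m := by
          have h1 := (hζmem m j hj).1
          have h2 := hT1 m
          linarith
        have hXζ : X m + (spikeC T X m j - X m) = spikeC T X m j := by ring
        have happ : ∀ x : ℝ,
            (translateW (spikeC T X m j - X m) (spikeQ v M w T X m j)
              - translateW (spikeC T X m j - X m) (spikeQ v M w T X m j')) x
            = spikeQ v M w T X m j (x + (spikeC T X m j - X m))
              - spikeQ v M w T X m j' (x + (spikeC T X m j - X m)) := fun x => rfl
        have hval : |(translateW (spikeC T X m j - X m) (spikeQ v M w T X m j)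
            - translateW (spikeC T X m j - X m) (spikeQ v M w T X m j')) (X m)|
            * v (X m) = spikeB v M w T X m * v (X m) := by
          rw [happ (X m), hXζ, spikeQ_self, spikeQ_other (Ne.symm hjj), sub_zero,
            abs_of_pos (spikeB_pos hM0 (hvY m))]
        have hbdd : BddAbove ((fun x =>
            |(translateW (spikeC T X m j - X m) (spikeQ v M w T X m j)
            - translateW (spikeC T X m j - X m) (spikeQ v M w T X m j')) x| * v x)
            '' Set.Ici (0:ℝ)) := by
          refine ⟨spikeB v M w T X m * (M * Real.exp (w * (spikeC T X m j - X m))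
            * (M * Real.exp w * v (X m + T m))), ?_⟩
          rintro r ⟨x, hx, rfl⟩
          dsimp only
          have hBpos := spikeB_pos (v := v) (w := w) (T := T) (X := X) (m := m) hM0 (hvY m)
          have hCpos : (0:ℝ) ≤ spikeB v M w T X m * (M * Real.exp (w * (spikeC T X m j - X m))
              * (M * Real.exp w * v (X m + T m))) := by
            have h1 := (hvY m).le
            have h2 := hBpos.le
            positivity
          by_cases hz : spikeQ v M w T X m j (x + (spikeC T X m j - X m)) = 0 ∧
              spikeQ v M w T X m j' (x + (spikeC T X m j - X m)) = 0
          · rw [happ x, hz.1, hz.2, sub_zero, abs_zero, zero_mul]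
            exact hCpos
          · have hwindow : X m + T m - 1 ≤ x + (spikeC T X m j - X m) ∧
                x + (spikeC T X m j - X m) ≤ X m + T m := by
              rcases not_and_or.1 hz with hz1 | hz1
              · exact spikeQ_supp hj hz1
              · exact spikeQ_supp hj' hz1
            have habs : |spikeQ v M w T X m j (x + (spikeC T X m j - X m))
                - spikeQ v M w T X m j' (x + (spikeC T X m j - X m))|
                ≤ spikeB v M w T X m := by
              have hb1 := spikeQ_nonneg (v := v) (w := w) (T := T) (X := X) (m := m) (j := j)
                hM0 (hvY m) (x + (spikeC T X m j - X m))
              have hb2 := spikeQ_le (v := v) (w := w) (T := T) (X := X) (m := m) (j := j)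
                hM0 (hvY m) (x + (spikeC T X m j - X m))
              have hb3 := spikeQ_nonneg (v := v) (w := w) (T := T) (X := X) (m := m) (j := j')
                hM0 (hvY m) (x + (spikeC T X m j - X m))
              have hb4 := spikeQ_le (v := v) (w := w) (T := T) (X := X) (m := m) (j := j')
                hM0 (hvY m) (x + (spikeC T X m j - X m))
              rw [abs_sub_le_iff]
              constructor <;> linarith
            have hvx : v x ≤ M * Real.exp (w * (spikeC T X m j - X m))
                * v (x + (spikeC T X m j - X m)) := hadm x hx _ hu0
            have hvxu : v (x + (spikeC T X m j - X m)) ≤ M * Real.exp w * v (X m + T m) :=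
              window_weight_le hM0 hw hpos hadm (hY1 m) hwindow.1 hwindow.2
            have hvchain : v x ≤ M * Real.exp (w * (spikeC T X m j - X m))
                * (M * Real.exp w * v (X m + T m)) := by
              calc v x ≤ M * Real.exp (w * (spikeC T X m j - X m))
                  * v (x + (spikeC T X m j - X m)) := hvx
                _ ≤ M * Real.exp (w * (spikeC T X m j - X m))
                  * (M * Real.exp w * v (X m + T m)) :=
                    mul_le_mul_of_nonneg_left hvxu (by positivity)
            rw [happ x]
            exact mul_le_mul habs hvchain (hpos x hx).le hBpos.le
        have hmem : |(translateW (spikeC T X m j - X m) (spikeQ v M w T X m j)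
            - translateW (spikeC T X m j - X m) (spikeQ v M w T X m j')) (X m)| * v (X m)
            ∈ ((fun x => |(translateW (spikeC T X m j - X m) (spikeQ v M w T X m j)
            - translateW (spikeC T X m j - X m) (spikeQ v M w T X m j')) x| * v x)
            '' Set.Ici (0:ℝ)) := ⟨X m, hX0 m, rfl⟩
        have h2 := le_csSup hbdd hmem
        rw [hval] at h2
        exact le_trans (hβv m) h2
    calc (spikeJ T m : ℝ≥0∞) = (S.card : ℝ≥0∞) := by rw [hcard]
      _ ≤ maxSep (fun f g => c0Norm v (f - g)) translateW K (T m) 1 :=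
          le_iSup₂_of_le S ⟨hSK, hSsep⟩ le_rfl
  -- the limsup at separation scale 1 is ⊤
  have hTpos : ∀ m, (0:ℝ) < T m := fun m => lt_of_lt_of_le one_pos (hT1 m)
  have helog : ∀ m : ℕ, ((m:ℝ) : EReal) ≤ (((T m)⁻¹ : ℝ) : EReal)
      * elog (maxSep (fun f g => c0Norm v (f - g)) translateW K (T m) 1) := by
    intro m
    by_cases hA : maxSep (fun f g => c0Norm v (f - g)) translateW K (T m) 1 = ⊤
    · rw [hA, show elog ⊤ = ⊤ from if_pos rfl,
        EReal.mul_top_of_pos (EReal.coe_pos.2 (inv_pos.2 (hTpos m)))]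
      exact le_top
    · rw [show elog (maxSep (fun f g => c0Norm v (f - g)) translateW K (T m) 1)
          = ((Real.log (maxSep (fun f g => c0Norm v (f - g)) translateW K (T m) 1).toReal : ℝ)
            : EReal) from if_neg hA, ← EReal.coe_mul, EReal.coe_le_coe_iff]
      have h1 : (spikeJ T m : ℝ)
          ≤ (maxSep (fun f g => c0Norm v (f - g)) translateW K (T m) 1).toReal := by
        have h2 := ENNReal.toReal_mono hA (hmax m)
        simpa using h2
      have hJpos : (0:ℝ) < (spikeJ T m : ℝ) := by exact_mod_cast spikeJ_pos T m
      have h2 : (m:ℝ) * T m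
          ≤ Real.log (maxSep (fun f g => c0Norm v (f - g)) translateW K (T m) 1).toReal :=
        le_trans (spikeJ_log T m) (Real.log_le_log hJpos h1)
      calc (m:ℝ) = (T m)⁻¹ * ((m:ℝ) * T m) := by
            rw [inv_mul_eq_div, mul_div_assoc, div_self (ne_of_gt (hTpos m)), mul_one]
        _ ≤ (T m)⁻¹ * Real.log (maxSep (fun f g => c0Norm v (f - g))
              translateW K (T m) 1).toReal :=
            mul_le_mul_of_nonneg_left h2 (inv_nonneg.2 (hTpos m).le)
  have hlimsup : Filter.limsup (fun t : ℝ => ((t⁻¹ : ℝ) : EReal)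
      * elog (maxSep (fun f g => c0Norm v (f - g)) translateW K t 1)) Filter.atTop = ⊤ := by
    apply ereal_eq_top_of_forall_le
    intro C
    rw [Filter.limsup_eq]
    refine le_sInf fun a ha => ?_
    have hfreq : ∃ᶠ t in atTop, (C : EReal) ≤ ((t⁻¹ : ℝ) : EReal)
        * elog (maxSep (fun f g => c0Norm v (f - g)) translateW K t 1) := by
      rw [frequently_atTop]
      intro a'
      obtain ⟨m, hm⟩ := exists_nat_ge (max a' C)
      refine ⟨T m, le_trans (le_trans (le_max_left a' C) hm) (hTm m), ?_⟩
      calc (C : EReal) ≤ ((m:ℝ) : EReal) :=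
            EReal.coe_le_coe_iff.2 (le_trans (le_max_right a' C) hm)
        _ ≤ _ := helog m
    obtain ⟨t, hC, hle⟩ := (hfreq.and_eventually ha).exists
    exact hC.trans hle
  -- conclusion
  apply top_le_iff.1
  calc (⊤ : EReal) = Filter.limsup (fun t : ℝ => ((t⁻¹ : ℝ) : EReal)
      * elog (maxSep (fun f g => c0Norm v (f - g)) translateW K t 1)) Filter.atTop :=
        hlimsup.symm
    _ ≤ entropyOn (fun f g => c0Norm v (f - g)) translateW K :=
        le_iSup₂_of_le 1 one_pos le_rfl
    _ ≤ entropyFam (fun f g => c0Norm v (f - g)) translateW {f | MemC0 v f} :=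
        le_iSup₂_of_le K ⟨hKA, hKcomp⟩ le_rfl
end

section
/- Let 0 < p < ∞ and let v be the constant weight function v(x) = c for some c > 0. Then for every t > 0, the left translation operator T_t is chain transitive on L^p_v(ℝ₊): for all f, g ∈ L^p_v(ℝ₊) and every ε > 0, there is an ε-chain for T_t from f to g. -/
open MeasureTheory Filter Set
open scoped ENNReal

lemma map_restrict_Ici (a b : ℝ) :
    (volume.restrict (Ici b)).map (MeasurableEquiv.addRight a) = volume.restrict (Ici (b + a)) := by
  have hpre : (MeasurableEquiv.addRight a) ⁻¹' (Ici (b + a)) = Ici b := by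
    ext x; simp [MeasurableEquiv.coe_addRight]
  calc (volume.restrict (Ici b)).map (MeasurableEquiv.addRight a)
      = ((volume.map (MeasurableEquiv.addRight a)).restrict (Ici (b+a))) := by
        rw [Measure.restrict_map (MeasurableEquiv.addRight a).measurable measurableSet_Ici, hpre]
    _ = volume.restrict (Ici (b+a)) := by
        have : (⇑(MeasurableEquiv.addRight a)) = (fun x : ℝ => x + a) := by
          funext x; simp [MeasurableEquiv.coe_addRight]
        rw [this, map_add_right_eq_self]

lemma integral_Ici_add (h : ℝ → ℝ) (a b : ℝ) :
    ∫ x in Ici b, h (x + a) = ∫ x in Ici (b + a), h x := by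
  rw [← map_restrict_Ici a b, MeasureTheory.integral_map_equiv]
  simp [MeasurableEquiv.coe_addRight]

lemma integrableOn_Ici_add_iff (h : ℝ → ℝ) (a b : ℝ) :
    IntegrableOn (fun x => h (x + a)) (Ici b) ↔ IntegrableOn h (Ici (b + a)) := by
  rw [IntegrableOn, IntegrableOn, ← map_restrict_Ici a b,
    MeasureTheory.integrable_map_equiv]
  rfl

lemma qmp_add (a : ℝ) (ha : 0 ≤ a) :
    Measure.QuasiMeasurePreserving (fun x : ℝ => x + a)
      (volume.restrict (Ici (0:ℝ))) (volume.restrict (Ici (0:ℝ))) := by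
  refine ⟨measurable_add_const a, ?_⟩
  have : (fun x : ℝ => x + a) = ⇑(MeasurableEquiv.addRight a) := by
    funext x; simp [MeasurableEquiv.coe_addRight]
  rw [this, map_restrict_Ici a 0, zero_add]
  exact (Measure.restrict_mono (Ici_subset_Ici.mpr ha) le_rfl).absolutelyContinuous

lemma qmp_sub (s : ℝ) :
    Measure.QuasiMeasurePreserving (fun x : ℝ => x - s)
      (volume.restrict (Ici s)) (volume.restrict (Ici (0:ℝ))) := by
  refine ⟨measurable_sub_const s, ?_⟩
  have : (fun x : ℝ => x - s) = ⇑(MeasurableEquiv.addRight (-s)) := by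
    funext x; simp [MeasurableEquiv.coe_addRight, sub_eq_add_neg]
  rw [this, map_restrict_Ici (-s) s, add_neg_cancel]

lemma lpNorm_lt_of_integral_lt {p c ε : ℝ} (hp : 0 < p) (hc : 0 < c) (hε : 0 < ε)
    (d : ℝ → ℝ) (h : ∫ x in Ici (0:ℝ), |d x| ^ p * c < ε ^ p) :
    lpNorm p (fun _ => c) d < ε := by
  have hnn : 0 ≤ ∫ x in Ici (0:ℝ), |d x| ^ p * c :=
    setIntegral_nonneg measurableSet_Ici fun x _ => by positivity
  have h1 : (∫ x in Ici (0:ℝ), |d x| ^ p * c) ^ (1/p) < (ε ^ p) ^ (1/p) :=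
    Real.rpow_lt_rpow hnn h (by positivity)
  have h2 : (ε ^ p) ^ (1/p) = ε := by
    rw [← Real.rpow_mul hε.le, mul_one_div_cancel hp.ne', Real.rpow_one]
  calc lpNorm p (fun _ => c) d = (∫ x in Ici (0:ℝ), |d x| ^ p * c) ^ (1/p) := rfl
    _ < (ε ^ p) ^ (1/p) := h1
    _ = ε := h2

lemma tail_small (h : ℝ → ℝ) (hint : IntegrableOn h (Ici (0:ℝ))) (hpos : ∀ x, 0 ≤ h x)
    {ε : ℝ} (hε : 0 < ε) : ∃ s₀ : ℝ, 0 ≤ s₀ ∧ ∀ s, s₀ ≤ s → ∫ x in Ici s, h x < ε := by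
  have hU : ⋃ n : ℕ, Icc (0:ℝ) n = Ici 0 := by
    ext x
    simp only [mem_iUnion, mem_Icc, mem_Ici]
    constructor
    · rintro ⟨n, h0, _⟩; exact h0
    · intro hx; obtain ⟨n, hn⟩ := exists_nat_ge x; exact ⟨n, hx, hn⟩
  have hint' : IntegrableOn h (⋃ n : ℕ, Icc (0:ℝ) n) := by rw [hU]; exact hint
  have hmono := tendsto_setIntegral_of_monotone (μ := volume)
    (s := fun n : ℕ => Icc (0:ℝ) n) (f := h)
    (fun n => measurableSet_Icc)
    (fun a b hab => Icc_subset_Icc le_rfl (by exact_mod_cast hab)) hint'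
  rw [hU] at hmono
  set I := ∫ x in Ici (0:ℝ), h x with hI
  have hev : ∀ᶠ n : ℕ in atTop, I - ∫ x in Icc (0:ℝ) n, h x < ε := by
    filter_upwards [hmono (Metric.ball_mem_nhds I hε)] with n hn
    have := abs_lt.mp (by simpa [Real.dist_eq] using hn)
    linarith [this.1]
  obtain ⟨n₀, hn₀⟩ := hev.exists
  refine ⟨(n₀ : ℝ) + 1, by positivity, fun s hs => ?_⟩
  have hunion : Icc (0:ℝ) n₀ ∪ Ioi (n₀:ℝ) = Ici 0 :=
    Set.Icc_union_Ioi_eq_Ici (by positivity)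
  have hi1 : IntegrableOn h (Icc (0:ℝ) n₀) :=
    hint.mono_set (by rw [← hunion]; exact subset_union_left)
  have hi2 : IntegrableOn h (Ioi (n₀:ℝ)) :=
    hint.mono_set (by rw [← hunion]; exact subset_union_right)
  have hdisj : Disjoint (Icc (0:ℝ) n₀) (Ioi (n₀:ℝ)) := by
    simp only [Set.disjoint_left, mem_Icc, mem_Ioi]
    rintro a ⟨_, h1⟩ h2
    linarith
  have hsplit : I = (∫ x in Icc (0:ℝ) n₀, h x) + ∫ x in Ioi (n₀ : ℝ), h x := by
    rw [hI, ← hunion]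
    exact setIntegral_union hdisj measurableSet_Ioi hi1 hi2
  have hIoi : ∫ x in Ioi (n₀ : ℝ), h x < ε := by linarith
  have hsub : Ici s ⊆ Ioi (n₀ : ℝ) := fun x hx => lt_of_lt_of_le (by linarith : (n₀:ℝ) < s) hx
  have hmono2 : ∫ x in Ici s, h x ≤ ∫ x in Ioi (n₀ : ℝ), h x := by
    refine setIntegral_mono_set hi2 ?_ (HasSubset.Subset.eventuallyLE hsub)
    exact Filter.Eventually.of_forall fun x => hpos x
  linarith

lemma memG {p c : ℝ} (hp : 0 < p) (hc : 0 < c) (g : ℝ → ℝ)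
    (hgm : AEStronglyMeasurable g (volume.restrict (Set.Ici (0:ℝ))))
    (hgi : IntegrableOn (fun x => |g x| ^ p * c) (Set.Ici (0:ℝ)))
    (lam s : ℝ) (hs : 0 ≤ s) :
    MemLpW p (fun _ => c) (fun x => if s ≤ x then lam * g (x - s) else 0) := by
  have hind : (fun x => if s ≤ x then lam * g (x - s) else 0)
      = (Ici s).indicator (fun x => lam * g (x - s)) := by
    funext x; simp [Set.indicator_apply, mem_Ici]
  have hres : (volume.restrict (Ici (0:ℝ))).restrict (Ici s) = volume.restrict (Ici s) := by
    rw [Measure.restrict_restrict measurableSet_Ici, Set.Ici_inter_Ici, max_eq_left hs]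
  constructor
  · rw [hind, aestronglyMeasurable_indicator_iff measurableSet_Ici, hres]
    exact (hgm.const_mul lam).comp_quasiMeasurePreserving (qmp_sub s)
  · have heq : (fun x => |(fun x => if s ≤ x then lam * g (x - s) else 0) x| ^ p * c)
        = (Ici s).indicator (fun x => |lam| ^ p * (|g (x - s)| ^ p * c)) := by
      funext x
      by_cases hx : s ≤ x
      · rw [Set.indicator_of_mem (mem_Ici.mpr hx)]
        simp only [if_pos hx]
        rw [abs_mul, Real.mul_rpow (abs_nonneg _) (abs_nonneg _)]
        ring
      · rw [Set.indicator_of_notMem (fun h => hx (mem_Ici.mp h))]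
        simp only [if_neg hx]
        rw [abs_zero, Real.zero_rpow hp.ne', zero_mul]
    rw [IntegrableOn] at *
    rw [heq, integrable_indicator_iff measurableSet_Ici, IntegrableOn, hres]
    have h1 : IntegrableOn (fun y => |lam| ^ p * (|g y| ^ p * c)) (Ici (0:ℝ)) :=
      hgi.const_mul _
    have h2 := (integrableOn_Ici_add_iff (fun y => |lam| ^ p * (|g y| ^ p * c)) (-s) s).mpr
      (by rw [add_neg_cancel]; exact h1)
    have : (fun x => |lam| ^ p * (|g (x - s)| ^ p * c))
        = (fun x => |lam| ^ p * (|g (x + -s)| ^ p * c)) := by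
      funext x; rw [sub_eq_add_neg]
    rw [this]
    exact h2

lemma linkG {p c : ℝ} (hp : 0 < p) (g : ℝ → ℝ) (lam s : ℝ) (hs : 0 ≤ s) :
    ∫ x in Ici (0:ℝ), |if s ≤ x then lam * g (x - s) else 0| ^ p * c
      = |lam| ^ p * ∫ x in Ici (0:ℝ), |g x| ^ p * c := by
  have heq : (fun x => |if s ≤ x then lam * g (x - s) else 0| ^ p * c)
      = (Ici s).indicator (fun x => |lam| ^ p * (|g (x - s)| ^ p * c)) := by
    funext x
    by_cases hx : s ≤ x
    · rw [Set.indicator_of_mem (mem_Ici.mpr hx)]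
      simp only [if_pos hx]
      rw [abs_mul, Real.mul_rpow (abs_nonneg _) (abs_nonneg _)]
      ring
    · rw [Set.indicator_of_notMem (fun h => hx (mem_Ici.mp h))]
      simp only [if_neg hx]
      rw [abs_zero, Real.zero_rpow hp.ne', zero_mul]
  calc ∫ x in Ici (0:ℝ), |if s ≤ x then lam * g (x - s) else 0| ^ p * c
      = ∫ x in Ici (0:ℝ), (Ici s).indicator (fun x => |lam| ^ p * (|g (x - s)| ^ p * c)) x := by
        rw [heq]
    _ = ∫ x in Ici (0:ℝ) ∩ Ici s, |lam| ^ p * (|g (x - s)| ^ p * c) := by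
        rw [setIntegral_indicator measurableSet_Ici]
    _ = ∫ x in Ici s, |lam| ^ p * (|g (x - s)| ^ p * c) := by
        rw [Set.Ici_inter_Ici, max_eq_right hs]
    _ = |lam| ^ p * ∫ x in Ici s, |g (x - s)| ^ p * c := by
        rw [MeasureTheory.integral_const_mul]
    _ = |lam| ^ p * ∫ x in Ici (0:ℝ), |g x| ^ p * c := by
        congr 1
        have h1 := integral_Ici_add (fun y => |g y| ^ p * c) (-s) s
        rw [add_neg_cancel] at h1
        rw [← h1]
        simp only [sub_eq_add_neg]

set_option maxHeartbeats 1000000 in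
theorem lp_constant_weight_chain_transitive
    (p : ℝ) (hp : 0 < p) (c : ℝ) (hc : 0 < c) (t : ℝ) (ht : 0 < t) :
    ∀ f g : ℝ → ℝ, MemLpW p (fun _ => c) f → MemLpW p (fun _ => c) g → ∀ ε > (0:ℝ),
      ∃ (n : ℕ) (F : ℕ → ℝ → ℝ), F 0 = f ∧ F n = g ∧
        (∀ i ≤ n, MemLpW p (fun _ => c) (F i)) ∧
        ∀ i < n, lpNorm p (fun _ => c) (translateW t (F i) - F (i + 1)) < ε := by
  intro f g hf hg ε hε
  obtain ⟨hfm, hfi⟩ := hf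
  obtain ⟨hgm, hgi⟩ := hg
  set Hf : ℝ → ℝ := fun x => |f x| ^ p * c with hHf
  set Hg : ℝ → ℝ := fun x => |g x| ^ p * c with hHg
  have hHfpos : ∀ x, 0 ≤ Hf x := fun x => by
    simp only [hHf]; positivity
  have hHgpos : ∀ x, 0 ≤ Hg x := fun x => by
    simp only [hHg]; positivity
  set Ig := ∫ x in Ici (0:ℝ), Hg x with hIgdef
  have hIg0 : 0 ≤ Ig := setIntegral_nonneg measurableSet_Ici fun x _ => hHgpos x
  have hεp : 0 < ε ^ p := Real.rpow_pos_of_pos hε p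
  -- choose m
  obtain ⟨m, hmgt⟩ := exists_nat_gt (max 1 (Ig ^ (1/p) / ε))
  have hm1 : 1 ≤ m := by
    have h1 : (1:ℝ) < m := lt_of_le_of_lt (le_max_left _ _) hmgt
    exact_mod_cast h1.le
  have hmR : (0:ℝ) < m := by
    have : (1:ℝ) ≤ m := by exact_mod_cast hm1
    linarith
  have hkey : (1/(m:ℝ)) * Ig ^ (1/p) < ε := by
    have h1 : Ig ^ (1/p) / ε < m := lt_of_le_of_lt (le_max_right _ _) hmgt
    rw [div_lt_iff₀ hε] at h1
    rw [one_div, inv_mul_lt_iff₀ hmR]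
    linarith [h1]
  have hkeyp : (1/(m:ℝ)) ^ p * Ig < ε ^ p := by
    have e1 : ((1/(m:ℝ)) * Ig ^ (1/p)) ^ p = (1/(m:ℝ)) ^ p * Ig := by
      rw [Real.mul_rpow (by positivity) (Real.rpow_nonneg hIg0 _), ← Real.rpow_mul hIg0,
        one_div_mul_cancel hp.ne', Real.rpow_one]
    rw [← e1]
    exact Real.rpow_lt_rpow (by positivity) hkey hp
  -- choose N
  obtain ⟨s₀, hs₀, htail⟩ := tail_small Hf hfi hHfpos hεp
  obtain ⟨N, hN⟩ := exists_nat_ge (s₀ / t)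
  have hNt : s₀ ≤ ((N:ℝ) + 1) * t := by
    have h1 : s₀ ≤ (N:ℝ) * t := by rwa [div_le_iff₀ ht] at hN
    nlinarith
  -- the chain
  set G : ℕ → ℝ → ℝ := fun j x =>
    if ((m:ℝ) - j) * t ≤ x then ((j:ℝ)/m) * g (x - ((m:ℝ) - j) * t) else 0 with hGdef
  set F : ℕ → ℝ → ℝ := fun i =>
    if i ≤ N then translateW ((i:ℝ) * t) f
    else if i < N + 1 + m then G (i - (N+1)) else g with hFdef
  have hFle : ∀ i, i ≤ N → F i = translateW ((i:ℝ) * t) f := by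
    intro i h1; simp only [hFdef]; rw [if_pos h1]
  have hFmid : ∀ i, ¬ (i ≤ N) → i < N + 1 + m → F i = G (i - (N+1)) := by
    intro i h1 h2; simp only [hFdef]; rw [if_neg h1, if_pos h2]
  have hFlast : F (N + 1 + m) = g := by
    simp only [hFdef]; rw [if_neg (by omega), if_neg (by omega)]
  refine ⟨N + 1 + m, F, ?_, hFlast, ?_, ?_⟩
  · rw [hFle 0 (Nat.zero_le N)]
    funext x
    simp [translateW]
  · -- membership
    intro i hi
    by_cases h1 : i ≤ N
    · rw [hFle i h1]
      have ha : (0:ℝ) ≤ (i:ℝ) * t := by positivity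
      constructor
      · exact hfm.comp_quasiMeasurePreserving (qmp_add ((i:ℝ)*t) ha)
      · have h2 := (integrableOn_Ici_add_iff Hf ((i:ℝ)*t) 0).mpr
          (by rw [zero_add]; exact hfi.mono_set (Ici_subset_Ici.mpr ha))
        exact h2
    · by_cases h2 : i < N + 1 + m
      · rw [hFmid i h1 h2]
        set j := i - (N+1) with hj
        have hjm : j < m := by omega
        have hjR : (j:ℝ) + 1 ≤ m := by exact_mod_cast Nat.succ_le_of_lt hjm
        have hs : (0:ℝ) ≤ ((m:ℝ) - j) * t := by nlinarith
        simp only [hGdef]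
        exact memG hp hc g hgm hgi _ _ hs
      · have : i = N + 1 + m := by omega
        rw [this, hFlast]
        exact ⟨hgm, hgi⟩
  · -- links
    intro i hi
    rcases lt_trichotomy i N with hiN | hiN | hiN
    · -- phase 1 interior
      have hd : translateW t (F i) - F (i + 1) = fun _ => (0:ℝ) := by
        funext x
        rw [Pi.sub_apply, hFle i hiN.le, hFle (i+1) hiN]
        simp only [translateW]
        rw [sub_eq_zero]
        congr 1
        push_cast
        ring
      rw [hd]
      have : lpNorm p (fun _ => c) (fun _ => (0:ℝ)) = 0 := by
        simp [_root_.lpNorm, Real.zero_rpow hp.ne', Real.zero_rpow (one_div_ne_zero hp.ne'),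
          Real.zero_rpow (inv_ne_zero hp.ne')]
      rw [this]; exact hε
    · -- phase boundary i = N
      subst hiN
      have hd : translateW t (F i) - F (i + 1)
          = fun x => f (x + ((i:ℝ) + 1) * t) := by
        funext x
        rw [Pi.sub_apply, hFle i le_rfl, hFmid (i+1) (by omega) (by omega)]
        have : i + 1 - (i + 1) = 0 := by omega
        rw [this]
        simp only [hGdef, translateW, Nat.cast_zero, zero_div, zero_mul, ite_self, sub_zero]
        congr 1
        ring
      rw [hd]
      apply lpNorm_lt_of_integral_lt hp hc hε
      have h1 := integral_Ici_add Hf (((i:ℝ) + 1) * t) 0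
      rw [zero_add] at h1
      calc ∫ x in Ici (0:ℝ), |f (x + ((i:ℝ) + 1) * t)| ^ p * c
          = ∫ x in Ici (0:ℝ), Hf (x + ((i:ℝ) + 1) * t) := rfl
        _ = ∫ x in Ici (((i:ℝ) + 1) * t), Hf x := h1
        _ < ε ^ p := htail _ hNt
    · -- phase 2
      by_cases h2 : i + 1 < N + 1 + m
      · -- interior of phase 2
        set j := i - (N+1) with hj
        have hiF : F i = G j := hFmid i (by omega) (by omega)
        have hiF2 : F (i+1) = G (j+1) := by
          rw [hFmid (i+1) (by omega) h2]
          have harg : i + 1 - (N+1) = j + 1 := by omega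
          rw [harg]
        have hjm : j + 1 < m := by omega
        have hjR : (j:ℝ) + 1 + 1 ≤ m := by exact_mod_cast Nat.succ_le_of_lt hjm
        have hm0 : (m:ℝ) ≠ 0 := ne_of_gt hmR
        have hs'0 : (0:ℝ) ≤ ((m:ℝ) - ((j:ℝ) + 1)) * t := by nlinarith
        have hd : translateW t (F i) - F (i + 1)
            = fun x => if ((m:ℝ) - ((j:ℝ) + 1)) * t ≤ x
                then (-(1/(m:ℝ))) * g (x - ((m:ℝ) - ((j:ℝ) + 1)) * t) else 0 := by
          funext x
          rw [Pi.sub_apply, hiF, hiF2]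
          simp only [hGdef, translateW, Nat.cast_add, Nat.cast_one]
          by_cases hx : ((m:ℝ) - ((j:ℝ) + 1)) * t ≤ x
          · have hc1 : ((m:ℝ) - (j:ℝ)) * t ≤ x + t := by nlinarith
            rw [if_pos hc1, if_pos hx, if_pos hx,
              show x + t - ((m:ℝ) - (j:ℝ)) * t = x - ((m:ℝ) - ((j:ℝ) + 1)) * t by ring]
            field_simp
            ring
          · have hc1 : ¬ ((m:ℝ) - (j:ℝ)) * t ≤ x + t := by
              intro h; exact hx (by nlinarith)
            rw [if_neg hc1, if_neg hx, if_neg hx, sub_zero]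
        rw [hd]
        apply lpNorm_lt_of_integral_lt hp hc hε
        calc ∫ x in Ici (0:ℝ), |if ((m:ℝ) - ((j:ℝ) + 1)) * t ≤ x
                then (-(1/(m:ℝ))) * g (x - ((m:ℝ) - ((j:ℝ) + 1)) * t) else 0| ^ p * c
            = |(-(1/(m:ℝ)))| ^ p * Ig := linkG hp g _ _ hs'0
          _ = (1/(m:ℝ)) ^ p * Ig := by rw [abs_neg, abs_of_nonneg (by positivity)]
          _ < ε ^ p := hkeyp
      · -- last link : i + 1 = N + 1 + m
        have hieq : i = N + m := by omega
        have harg0 : i - (N+1) = m - 1 := by omega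
        have hiF : F i = G (m - 1) := by
          rw [hFmid i (by omega) (by omega), harg0]
        have hiF2 : F (i+1) = g := by
          have : i + 1 = N + 1 + m := by omega
          rw [this, hFlast]
        have hcast : ((m - 1 : ℕ) : ℝ) = (m:ℝ) - 1 := by
          have := Nat.cast_sub hm1 (R := ℝ)
          simpa using this
        apply lpNorm_lt_of_integral_lt hp hc hε
        have heqon : EqOn (fun x => |(translateW t (F i) - F (i+1)) x| ^ p * c)
            (fun x => (1/(m:ℝ)) ^ p * Hg x) (Ici (0:ℝ)) := by
          intro x hx
          have hx0 : (0:ℝ) ≤ x := mem_Ici.mp hx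
          simp only [Pi.sub_apply, hiF, hiF2, hGdef, translateW, hcast]
          have hcond : ((m:ℝ) - ((m:ℝ) - 1)) * t ≤ x + t := by nlinarith
          rw [if_pos hcond]
          have harg : x + t - ((m:ℝ) - ((m:ℝ) - 1)) * t = x := by ring
          rw [harg]
          have hval : ((m:ℝ) - 1) / m * g x - g x = (-(1/(m:ℝ))) * g x := by
            field_simp
            ring
          rw [hval, abs_mul, Real.mul_rpow (abs_nonneg _) (abs_nonneg _),
            abs_neg, abs_of_nonneg (by positivity : (0:ℝ) ≤ 1/(m:ℝ))]
          simp only [hHg]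
          ring
        rw [setIntegral_congr_fun measurableSet_Ici heqon, MeasureTheory.integral_const_mul]
        exact hkeyp
end
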